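/- arXiv:1201.3694 — 2 statements merged into one kernel-verified Lean document; each statement's English description precedes it below -/
import Mathlib

section
/- Let N be a free abelian group of finite rank with a symmetric bilinear form B such that B is nondegenerate, and let M ⊆ N be a submonoid generating N as a group. If the dual monoid Nef = { x ∈ N : B(x,m) ≥ 0 for all m ∈ M } is finitely generated and M is saturated in the sense that the rational cone spanned by M equals the dual cone of Nef in N⊗Q, then M is finitely generated. -/
private lemma dickson_aux {ι : Type*} [Fintype ι] (U : Set (ι → ℕ)) :
    ∃ F : Set (ι → ℕ), F.Finite ∧ F ⊆ U ∧ ∀ u ∈ U, ∃ f ∈ F, f ≤ u := by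
  classical
  have piPWO : ∀ s : Set (ι → ℕ), s.IsPWO := fun s =>
    Set.isPWO_of_wellQuasiOrderedLE s
  set Mn : Set (ι → ℕ) := {u | u ∈ U ∧ ∀ v ∈ U, v ≤ u → v = u} with hMn
  have hwf : WellFounded ((· < ·) : (ι → ℕ) → (ι → ℕ) → Prop) :=
    wellFounded_lt
  refine ⟨Mn, ?_, fun u hu => hu.1, ?_⟩
  · have hanti : IsAntichain (· ≤ ·) Mn := by
      intro a ha b hb hab hle
      exact hab (hb.2 a ha.1 hle)
    exact hanti.finite_of_partiallyWellOrderedOn (piPWO Mn)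
  · intro u hu
    obtain ⟨m, ⟨hmU, hmu⟩, hmin⟩ := hwf.has_min {v | v ∈ U ∧ v ≤ u} ⟨u, hu, le_rfl⟩
    refine ⟨m, ⟨hmU, fun v hv hvm => ?_⟩, hmu⟩
    by_contra hne
    exact hmin v ⟨hv, hvm.trans hmu⟩ (lt_of_le_of_ne hvm hne)

private lemma exists_rep_of_mem_closure {P : Type*} [AddCommMonoid P] [DecidableEq P]
    {F : Finset P} {x : P} (hx : x ∈ AddSubmonoid.closure (F : Set P)) :
    ∃ a : P → ℕ, x = ∑ f ∈ F, a f • f := by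
  induction hx using AddSubmonoid.closure_induction with
  | mem y hy =>
    refine ⟨fun p => if p = y then 1 else 0, ?_⟩
    rw [Finset.sum_eq_single_of_mem y hy]
    · simp
    · intro b _ hb; simp [hb]
  | zero => exact ⟨0, by simp⟩
  | add x y hx hy ihx ihy =>
    obtain ⟨a, ha⟩ := ihx; obtain ⟨b, hb⟩ := ihy
    exact ⟨a + b, by simp [ha, hb, add_smul, Finset.sum_add_distrib]⟩


/-- If the dual monoid `Nef` of a group-generating submonoid `M` of a lattice with
nondegenerate symmetric bilinear form is finitely generated, and `M` is saturated
(the lattice points whose positive multiple lies in `M` are exactly those pairing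
nonnegatively with all of `Nef`, i.e. the cone of `M` is the dual cone of `Nef`),
then `M` is finitely generated. -/
theorem stmt_2 {N : Type*} [AddCommGroup N] [Module.Free ℤ N] [Module.Finite ℤ N]
    (B : N →ₗ[ℤ] N →ₗ[ℤ] ℤ) (hB : ∀ x y, B x y = B y x)
    (hnd : ∀ x : N, (∀ y : N, B x y = 0) → x = 0)
    (M : AddSubmonoid N) (hgen : AddSubgroup.closure (M : Set N) = ⊤)
    (Nef : AddSubmonoid N)
    (hNef : (Nef : Set N) = {x : N | ∀ m ∈ M, 0 ≤ B x m})
    (hNefFG : Nef.FG)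
    (hsat : ∀ y : N, (∃ m : ℕ, 0 < m ∧ m • y ∈ M) ↔ ∀ x ∈ Nef, 0 ≤ B y x) :
    M.FG := by
  classical
  -- the saturated dual monoid, as a set
  set Scar : Set N := {y | ∀ x ∈ Nef, 0 ≤ B y x} with hScar
  have hS0 : (0 : N) ∈ Scar := fun x _ => by simp
  have hSadd : ∀ {a b : N}, a ∈ Scar → b ∈ Scar → a + b ∈ Scar := by
    intro a b ha hb x hx
    rw [map_add, LinearMap.add_apply]
    exact add_nonneg (ha x hx) (hb x hx)
  have hMS : ∀ m ∈ M, m ∈ Scar := fun m hm =>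
    (hsat m).mp ⟨1, Nat.one_pos, by simpa using hm⟩
  -- generators of Nef
  obtain ⟨X, hX⟩ := hNefFG
  have hXNef : ∀ x ∈ X, x ∈ Nef := fun x hx => hX ▸ AddSubmonoid.subset_closure hx
  have hSchar : ∀ y : N, (∀ x ∈ X, 0 ≤ B y x) → y ∈ Scar := by
    intro y hy
    set T : AddSubmonoid N :=
      { carrier := {x | 0 ≤ B y x}
        zero_mem' := by simp
        add_mem' := fun {a b} ha hb => by
          simp only [Set.mem_setOf_eq, map_add] at *
          exact add_nonneg ha hb } with hT
    have hle : Nef ≤ T := by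
      rw [← hX]
      exact AddSubmonoid.closure_le.mpr hy
    exact fun x hx => hle hx
  -- kernel of the pairing against X, as a submodule
  set Kker : Submodule ℤ N :=
    { carrier := {z | ∀ x ∈ X, B z x = 0}
      zero_mem' := by simp
      add_mem' := fun {a b} ha hb => by
        intro x hx
        rw [map_add, LinearMap.add_apply, ha x hx, hb x hx, add_zero]
      smul_mem' := fun c z hz => by
        intro x hx
        rw [map_smul, LinearMap.smul_apply, hz x hx, smul_zero] } with hKker
  have hKkerS : ∀ z ∈ Kker, z ∈ Scar := fun z hz => hSchar z fun x hx => le_of_eq (hz x hx).symm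
  obtain ⟨Kg, hKg⟩ := IsNoetherian.noetherian Kker
  have hKgK : ∀ k ∈ Kg, k ∈ Kker := fun k hk =>
    hKg ▸ Submodule.subset_span (by exact hk)
  -- the monoid of "pairing patterns" realisable by elements of Scar
  set D : Set (↥X → ℕ) := {a | ∃ y, y ∈ Scar ∧ ∀ x : ↥X, B y ↑x = (a x : ℤ)} with hD
  obtain ⟨F, hFfin, hFsub, hFdom⟩ := dickson_aux (D \ {0})
  have liftex : ∀ f ∈ F, ∃ y, y ∈ Scar ∧ ∀ x : ↥X, B y ↑x = (f x : ℤ) :=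
    fun f hf => (hFsub hf).1
  choose lifty hliftS hliftB using liftex
  set liftSet : Set N := {y | ∃ f, ∃ hf : f ∈ F, lifty f hf = y} with hlift
  have hliftFin : liftSet.Finite := hFfin.dependent_image _
  have hliftSetS : ∀ y ∈ liftSet, y ∈ Scar := by
    rintro y ⟨f, hf, rfl⟩
    exact hliftS f hf
  -- key induction: patterns in D are realised inside the closure of liftSet
  have key : ∀ n : ℕ, ∀ a ∈ D, (∑ x, a x) ≤ n →
      ∃ y, y ∈ AddSubmonoid.closure liftSet ∧ y ∈ Scar ∧ ∀ x : ↥X, B y ↑x = (a x : ℤ) := by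
    intro n
    induction n with
    | zero =>
      intro a _ hsum
      have ha0 : a = 0 := by
        funext x
        have h2 : a x ≤ ∑ x : ↥X, a x := Finset.single_le_sum (f := fun x => a x)
          (fun i _ => Nat.zero_le _) (Finset.mem_univ x)
        have : a x = 0 := by omega
        simpa using this
      exact ⟨0, zero_mem _, hS0, by simp [ha0]⟩
    | succ n ih =>
      intro a ha hsum
      by_cases h0 : a = 0
      · exact ⟨0, zero_mem _, hS0, by simp [h0]⟩
      · obtain ⟨f, hfF, hfle⟩ := hFdom a ⟨ha, h0⟩
        have hf0 : f ≠ 0 := (hFsub hfF).2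
        have hsubD : a - f ∈ D := by
          obtain ⟨y1, hy1S, hy1B⟩ := ha
          refine ⟨y1 - lifty f hfF, hSchar _ fun x hx => ?_, fun x => ?_⟩
          · rw [map_sub, LinearMap.sub_apply, hy1B ⟨x, hx⟩, hliftB f hfF ⟨x, hx⟩]
            have h : f ⟨x, hx⟩ ≤ a ⟨x, hx⟩ := hfle ⟨x, hx⟩
            omega
          · rw [map_sub, LinearMap.sub_apply, hy1B x, hliftB f hfF x]
            have h : f x ≤ a x := hfle x
            simp only [Pi.sub_apply]
            rw [Nat.cast_sub h]
        have hsum' : (∑ x, (a - f) x) ≤ n := by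
          have hx0 : ∃ x, f x ≠ 0 := by
            by_contra h
            push_neg at h
            exact hf0 (funext fun x => h x)
          obtain ⟨x0, hx0⟩ := hx0
          have h1 : ∑ x, (a - f) x + ∑ x, f x = ∑ x, a x := by
            rw [← Finset.sum_add_distrib]
            exact Finset.sum_congr rfl fun x _ => by
              have h : f x ≤ a x := hfle x
              simp only [Pi.sub_apply]
              omega
          have h2 : 1 ≤ ∑ x, f x :=
            le_trans (by omega) (Finset.single_le_sum
              (fun i _ => Nat.zero_le _) (Finset.mem_univ x0))
          omega
        obtain ⟨y', hy'c, hy'S, hy'B⟩ := ih (a - f) hsubD hsum'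
        refine ⟨lifty f hfF + y',
          add_mem (AddSubmonoid.subset_closure ⟨f, hfF, rfl⟩) hy'c,
          hSadd (hliftS f hfF) hy'S, fun x => ?_⟩
        rw [map_add, LinearMap.add_apply, hliftB f hfF x, hy'B x]
        have h : f x ≤ a x := hfle x
        simp only [Pi.sub_apply]
        rw [Nat.cast_sub h]
        ring
  -- the generating set for Scar
  set Sgen : Set N := liftSet ∪ ((↑Kg : Set N) ∪ (Neg.neg '' (↑Kg : Set N))) with hSgen
  have hSgenFin : Sgen.Finite :=
    (hliftFin.union ((Kg.finite_toSet).union (Kg.finite_toSet.image _)))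
  have hSgenS : ∀ y ∈ Sgen, y ∈ Scar := by
    rintro y (hy | hy | ⟨k, hk, rfl⟩)
    · exact hliftSetS y hy
    · exact hKkerS y (hKgK y hy)
    · exact hKkerS _ (neg_mem (hKgK k hk))
  have hScl : ∀ s ∈ Scar, s ∈ AddSubmonoid.closure Sgen := by
    intro s hs
    have haD : (fun x : ↥X => (B s ↑x).toNat) ∈ D := by
      refine ⟨s, hs, fun x => ?_⟩
      rw [Int.toNat_of_nonneg (hs ↑x (hXNef ↑x x.2))]
    obtain ⟨y, hyc, hyS, hyB⟩ := key _ _ haD le_rfl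
    have hker : s - y ∈ Kker := by
      intro x hx
      rw [map_sub, LinearMap.sub_apply, hyB ⟨x, hx⟩]
      have := hs x (hXNef x hx)
      simp only []
      rw [Int.toNat_of_nonneg this, sub_self]
    rw [← hKg] at hker
    obtain ⟨c, -, hc⟩ := Submodule.mem_span_finset.mp hker
    have hrw : s = y + ∑ k ∈ Kg, c k • k := by rw [hc]; abel
    rw [hrw]
    refine add_mem (AddSubmonoid.closure_mono Set.subset_union_left hyc)
      (AddSubmonoid.sum_mem _ fun k hk => ?_)
    rcases le_or_gt 0 (c k) with h | h
    · have heq : c k • k = (c k).toNat • k := by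
        rw [← natCast_zsmul, Int.toNat_of_nonneg h]
      have hm : k ∈ Sgen := by
        simp only [hSgen, Set.mem_union, Finset.mem_coe]
        exact Or.inr (Or.inl hk)
      rw [heq]
      exact AddSubmonoid.nsmul_mem _ (AddSubmonoid.subset_closure hm) _
    · have heq : c k • k = (-(c k)).toNat • (-k) := by
        rw [← natCast_zsmul, Int.toNat_of_nonneg (by omega), smul_neg, neg_zsmul, neg_neg]
      have hm : -k ∈ Sgen := by
        simp only [hSgen, Set.mem_union, Set.mem_image, Finset.mem_coe]
        exact Or.inr (Or.inr ⟨k, hk, rfl⟩)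
      rw [heq]
      exact AddSubmonoid.nsmul_mem _ (AddSubmonoid.subset_closure hm) _
  -- Part 2: from Scar to M
  set Sg : Finset N := hSgenFin.toFinset with hSgdef
  have hSgScl : ∀ s ∈ Scar, s ∈ AddSubmonoid.closure (↑Sg : Set N) := by
    intro s hs
    have hco : (↑Sg : Set N) = Sgen := Set.Finite.coe_toFinset hSgenFin
    rw [hco]
    exact hScl s hs
  have hSgS : ∀ s ∈ Sg, s ∈ Scar := fun s hs => hSgenS s (hSgenFin.mem_toFinset.mp hs)
  have hmult : ∀ s : ↥Sg, ∃ m : ℕ, 0 < m ∧ m • (s : N) ∈ M := fun s =>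
    (hsat s).mpr (hSgS s s.2)
  choose kk hkpos hkmem using hmult
  set K : ℕ := ∏ s ∈ Sg.attach, kk s with hK
  have hKpos : 0 < K := Finset.prod_pos fun s _ => hkpos s
  have hKmul : ∀ s : ↥Sg, K • (s : N) ∈ M := by
    intro s
    obtain ⟨c, hc⟩ := Finset.dvd_prod_of_mem kk (Finset.mem_attach Sg s)
    rw [show K = c * kk s by rw [hK, hc]; ring, mul_smul]
    exact AddSubmonoid.nsmul_mem _ (hkmem s) c
  set π : (↥Sg → ℕ) → N := fun a => ∑ s ∈ Sg.attach, a s • (s : N) with hπ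
  have hπadd : ∀ a b, π (a + b) = π a + π b := by
    intro a b
    simp only [hπ, Pi.add_apply, add_smul, Finset.sum_add_distrib]
  have hπK : ∀ a : ↥Sg → ℕ, π (K • a) = K • π a := by
    intro a
    simp only [hπ, Finset.smul_sum]
    exact Finset.sum_congr rfl fun s _ => by
      simp only [Pi.smul_apply, smul_eq_mul]
      rw [mul_smul]
  have hπmem : ∀ T : AddSubmonoid N, (∀ s : ↥Sg, K • (s : N) ∈ T) →
      ∀ a, K • π a ∈ T := by
    intro T hT a
    have hrw : K • π a = ∑ s ∈ Sg.attach, a s • (K • (s : N)) := by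
      rw [hπ, Finset.smul_sum]
      exact Finset.sum_congr rfl fun s _ => smul_comm _ _ _
    rw [hrw]
    exact AddSubmonoid.sum_mem _ fun s _ => AddSubmonoid.nsmul_mem _ (hT s) _
  have hMrep : ∀ m ∈ M, ∃ a : ↥Sg → ℕ, m = π a := by
    intro m hm
    obtain ⟨a, ha⟩ := exists_rep_of_mem_closure (hSgScl m (hMS m hm))
    refine ⟨fun s => a ↑s, ?_⟩
    rw [ha, hπ]
    exact (Finset.sum_attach Sg fun f => a f • f).symm
  set U : (↥Sg → Fin K) → Set (↥Sg → ℕ) :=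
    fun r => {b | π (fun s => ↑(r s)) + K • π b ∈ M} with hU
  choose FF hFFfin hFFsub hFFdom using fun r => dickson_aux (U r)
  set Gset : Set N :=
    (⋃ r : ↥Sg → Fin K, (fun g => π (fun s => ↑(r s)) + K • π g) '' FF r) ∪
      Set.range (fun s : ↥Sg => K • (s : N)) with hG
  have hGfin : Gset.Finite :=
    Set.Finite.union (Set.finite_iUnion fun r => (hFFfin r).image _) (Set.finite_range _)
  rw [AddSubmonoid.fg_iff]
  refine ⟨Gset, le_antisymm ?_ ?_, hGfin⟩
  · rw [AddSubmonoid.closure_le]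
    rintro y (hy | ⟨s, rfl⟩)
    · simp only [Set.mem_iUnion, Set.mem_image] at hy
      obtain ⟨r, g, hg, rfl⟩ := hy
      exact hFFsub r hg
    · exact hKmul s
  · intro m hm
    obtain ⟨a, rfl⟩ := hMrep m hm
    set r : ↥Sg → Fin K := fun s => ⟨a s % K, Nat.mod_lt _ hKpos⟩ with hr
    set b : ↥Sg → ℕ := fun s => a s / K with hb
    have hab : (fun s => ((r s : ℕ))) + K • b = a := by
      funext s
      simp only [hr, hb, Pi.add_apply, Pi.smul_apply, smul_eq_mul]
      exact Nat.mod_add_div _ _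
    have hbU : b ∈ U r := by
      simp only [hU, Set.mem_setOf_eq]
      rw [← hπK, ← hπadd, hab]
      exact hm
    obtain ⟨f, hf, hfb⟩ := hFFdom r b hbU
    have hfun : a = ((fun s => ((r s : ℕ))) + K • f) + (K • (b - f)) := by
      rw [← hab]
      funext s
      have h : f s ≤ b s := hfb s
      simp only [Pi.add_apply, Pi.smul_apply, smul_eq_mul, Pi.sub_apply]
      rw [add_assoc, ← Nat.mul_add, Nat.add_sub_cancel' h]
    have hsplit : π a = (π (fun s => ↑(r s)) + K • π f) + K • π (b - f) := by
      rw [hfun, hπadd, hπadd, hπK, hπK]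
    rw [hsplit]
    refine add_mem (AddSubmonoid.subset_closure ?_)
      (hπmem (AddSubmonoid.closure Gset) (fun s => AddSubmonoid.subset_closure ?_) _)
    · exact Set.mem_union_left _ (Set.mem_iUnion.mpr ⟨r, ⟨f, hf, rfl⟩⟩)
    · exact Set.mem_union_right _ ⟨s, rfl⟩
end

section
/- Let S be a submonoid of Zⁿ. If every element y of the rational dual-saturation of S (i.e., every y ∈ Zⁿ with n • y ∈ S for some positive integer n) already lies in S, and S is the set of lattice points of a finitely generated rational polyhedral cone, then S is finitely generated as a monoid. -/
/-- Gordan's lemma, saturated-monoid form: a saturated submonoid of `ℤⁿ` which is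
the set of lattice points of a finitely generated rational polyhedral cone is
finitely generated. -/
theorem stmt_5 {n : ℕ} (S : AddSubmonoid (Fin n → ℤ))
    (hsat : ∀ y : Fin n → ℤ, (∃ m : ℕ, 0 < m ∧ m • y ∈ S) → y ∈ S)
    (hcone : ∃ T : Finset (Fin n → ℚ), ∀ y : Fin n → ℤ,
      y ∈ S ↔ ∃ c : (Fin n → ℚ) → ℚ, (∀ t, 0 ≤ c t) ∧
        (fun i => (y i : ℚ)) = ∑ t ∈ T, c t • t) :
    S.FG := by
  classical
  obtain ⟨T, hT⟩ := hcone
  -- common denominator for each generator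
  set d : (Fin n → ℚ) → ℕ := fun t => ∏ i, (t i).den with hd
  have hdpos : ∀ t, 0 < d t := fun t => Finset.prod_pos (fun i _ => (t i).pos)
  -- integer scaling of each generator
  set u : (Fin n → ℚ) → (Fin n → ℤ) :=
    fun t i => ((d t / (t i).den : ℕ) : ℤ) * (t i).num with hu
  have hud : ∀ t i, ((u t i : ℚ)) = (d t : ℚ) * t i := by
    intro t i
    have hdvd : ((t i).den) ∣ d t := Finset.dvd_prod_of_mem _ (Finset.mem_univ i)
    have h0 : ((t i).den : ℚ) ≠ 0 := by
      exact_mod_cast (t i).den_nz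
    have h1 : ((d t / (t i).den : ℕ) : ℚ) = (d t : ℚ) / ((t i).den : ℚ) :=
      Nat.cast_div hdvd h0
    have h2 : ((u t i : ℤ) : ℚ) = ((d t / (t i).den : ℕ) : ℚ) * ((t i).num : ℚ) := by
      simp only [hu, Int.cast_mul, Int.cast_natCast]
    rw [h2, h1, div_mul_eq_mul_div, mul_div_assoc, Rat.num_div_den]
  -- each scaled generator belongs to S
  have huS : ∀ t ∈ T, u t ∈ S := by
    intro t ht
    rw [hT]
    refine ⟨fun s => if s = t then (d t : ℚ) else 0, ?_, ?_⟩
    · intro s; dsimp only; split <;> positivity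
    · have : ∀ s ∈ T, (if s = t then (d t : ℚ) else 0) • s
          = if s = t then (d t : ℚ) • s else 0 := by
        intro s _; split <;> simp
      rw [Finset.sum_congr rfl this, Finset.sum_ite_eq' T t (fun s => (d t : ℚ) • s),
        if_pos ht]
      funext i
      simpa using hud t i
  -- the bound
  set B : Fin n → ℤ := fun j => ∑ t ∈ T, |u t j| with hB
  set E : Set (Fin n → ℤ) := {y | y ∈ S ∧ ∀ j, |y j| ≤ B j} with hE
  have hEfin : E.Finite := by
    apply Set.Finite.subset (Set.Finite.pi (fun j => Set.finite_Icc (-(B j)) (B j)))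
    intro y hy
    simp only [Set.mem_pi, Set.mem_univ, Set.mem_Icc, forall_true_left]
    intro j
    exact abs_le.mp (hy.2 j)
  have huE : ∀ t ∈ T, u t ∈ E := by
    intro t ht
    refine ⟨huS t ht, fun j => ?_⟩
    exact Finset.single_le_sum (f := fun t => |u t j|) (fun s _ => abs_nonneg _) ht
  have hclos : AddSubmonoid.closure E = S := by
    apply le_antisymm
    · rw [AddSubmonoid.closure_le]; exact fun y hy => hy.1
    · intro y hyS
      obtain ⟨c, hc0, hcsum⟩ := (hT y).mp hyS
      set e : (Fin n → ℚ) → ℚ := fun t => c t / d t with he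
      have he0 : ∀ t, 0 ≤ e t := fun t => div_nonneg (hc0 t) (by positivity)
      have hfl0 : ∀ t, (0 : ℤ) ≤ ⌊e t⌋ := fun t => Int.floor_nonneg.mpr (he0 t)
      -- y written with the integer generators
      have hkey : ∀ i, ((y i : ℚ)) = ∑ t ∈ T, e t * (u t i : ℚ) := by
        intro i
        have := congrFun hcsum i
        simp only [Finset.sum_apply, Pi.smul_apply, smul_eq_mul] at this
        rw [this]
        refine Finset.sum_congr rfl (fun t _ => ?_)
        rw [hud, he]
        have hdt : (d t : ℚ) ≠ 0 := by have := hdpos t; positivity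
        field_simp
      set r : Fin n → ℤ := y - ∑ t ∈ T, ⌊e t⌋ • u t with hr
      have hrq : ∀ i, ((r i : ℚ)) = ∑ t ∈ T, Int.fract (e t) * (u t i : ℚ) := by
        intro i
        simp only [hr, Pi.sub_apply, Finset.sum_apply, Pi.smul_apply, smul_eq_mul]
        push_cast
        rw [hkey i, ← Finset.sum_sub_distrib]
        refine Finset.sum_congr rfl (fun t _ => ?_)
        rw [Int.fract]
        ring
      have hrS : r ∈ S := by
        rw [hT]
        refine ⟨fun s => if s ∈ T then Int.fract (e s) * d s else 0, ?_, ?_⟩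
        · intro s; dsimp only; split
          · exact mul_nonneg (Int.fract_nonneg _) (by positivity)
          · exact le_refl 0
        · funext i
          rw [hrq i, Finset.sum_apply]
          refine Finset.sum_congr rfl (fun t ht => ?_)
          simp only [if_pos ht, Pi.smul_apply, smul_eq_mul]
          rw [hud]
          ring
      have hrE : r ∈ E := by
        refine ⟨hrS, fun j => ?_⟩
        have : |(r j : ℚ)| ≤ (B j : ℚ) := by
          rw [hrq j, hB]
          push_cast
          refine le_trans (Finset.abs_sum_le_sum_abs _ _) ?_
          refine Finset.sum_le_sum (fun t _ => ?_)
          rw [abs_mul, abs_of_nonneg (Int.fract_nonneg _)]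
          calc Int.fract (e t) * |(u t j : ℚ)| ≤ 1 * |(u t j : ℚ)| := by
                exact mul_le_mul_of_nonneg_right (le_of_lt (Int.fract_lt_one _)) (abs_nonneg _)
            _ = |(u t j : ℚ)| := one_mul _
        exact_mod_cast this
      have hyr : y = r + ∑ t ∈ T, ⌊e t⌋ • u t := by rw [hr]; ring
      rw [hyr]
      refine AddSubmonoid.add_mem _ (AddSubmonoid.subset_closure hrE) ?_
      refine AddSubmonoid.sum_mem _ (fun t ht => ?_)
      have : ⌊e t⌋ • u t = (⌊e t⌋.toNat) • u t := by
        rw [← Int.toNat_of_nonneg (hfl0 t)]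
        simp
        rw [max_eq_left (hfl0 t)]
        congr 1
        ext j
        simp [Int.toNat_of_nonneg (hfl0 t)]
      rw [this]
      exact AddSubmonoid.nsmul_mem _ (AddSubmonoid.subset_closure (huE t ht)) _
  exact (AddSubmonoid.fg_iff S).mpr ⟨E, hclos, hEfin⟩
end
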